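/- Let p₀, p₁ ∈ [0, 1/2) and p ∈ [0, 1/2] be such that p * p₀ ≥ p₁ and p * p₁ ≥ p₀. Then the function ν ↦ ḡ(f̄⁻¹(ν)) is convex on the interval [H_b(p₀) + H_b(p₁), 2], where f̄⁻¹ denotes the inverse of the strictly increasing function f̄ : [0, 1/2] → [H_b(p₀) + H_b(p₁), 2]. -/

import Mathlib

/-- Binary entropy function (base-2 logarithm), with `Hb 0 = Hb 1 = 0`. -/
noncomputable def Hb (x : ℝ) : ℝ := -(x * Real.logb 2 x) - (1 - x) * Real.logb 2 (1 - x)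

/-- The star operation `p * x = p(1−x) + (1−p)x`. -/
noncomputable def pstar (p x : ℝ) : ℝ := p * (1 - x) + (1 - p) * x

/-- `f̄(x̄) = H_b(p₀ * x̄) + H_b(p₁ * x̄)`. -/
noncomputable def fbar (p₀ p₁ x : ℝ) : ℝ := Hb (pstar p₀ x) + Hb (pstar p₁ x)

/-- `ḡ(x̄) = H_b(p * p₀ * x̄) + H_b(p * p₁ * x̄)`. -/
noncomputable def gbar (p p₀ p₁ x : ℝ) : ℝ :=
  Hb (pstar p (pstar p₀ x)) + Hb (pstar p (pstar p₁ x))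

open Real Set


noncomputable def Lam (t : ℝ) : ℝ := Real.log (1 - t) - Real.log t

lemma Hb_eq (x : ℝ) : Hb x = (Real.negMulLog x + Real.negMulLog (1 - x)) / Real.log 2 := by
  simp only [Hb, Real.negMulLog, Real.logb]; ring

lemma continuous_Hb : Continuous Hb := by
  have : Hb = fun x => (Real.negMulLog x + Real.negMulLog (1 - x)) / Real.log 2 :=
    funext Hb_eq
  rw [this]
  exact (Real.continuous_negMulLog.add
    (Real.continuous_negMulLog.comp (continuous_const.sub continuous_id))).div_const _

lemma hasDerivAt_Hb {t : ℝ} (h0 : 0 < t) (h1 : t < 1) :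
    HasDerivAt Hb (Lam t / Real.log 2) t := by
  have h1' : (0:ℝ) < 1 - t := by linarith
  have hx : HasDerivAt (fun x : ℝ => x * Real.log x) (Real.log t + 1) t :=
    Real.hasDerivAt_mul_log h0.ne'
  have hy : HasDerivAt (fun x : ℝ => (1 - x) * Real.log (1 - x)) (-(Real.log (1 - t) + 1)) t := by
    have h2 := (Real.hasDerivAt_mul_log h1'.ne').comp t ((hasDerivAt_id t).const_sub 1)
    refine h2.congr_deriv ?_
    ring
  have heq : Hb = fun x => (-(x * Real.log x) - (1 - x) * Real.log (1 - x)) / Real.log 2 := by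
    funext x; simp only [Hb, Real.logb]; ring
  rw [heq]
  have := (hx.neg.sub hy).div_const (Real.log 2)
  refine this.congr_deriv ?_
  simp only [Lam]; ring

lemma pstar_eq (q x : ℝ) : pstar q x = q + (1 - 2*q) * x := by unfold pstar; ring

lemma hasDerivAt_pstar (q x : ℝ) : HasDerivAt (fun y => pstar q y) (1 - 2*q) x := by
  have e : (fun y => pstar q y) = fun y => q + (1 - 2*q) * y := by
    funext y; rw [pstar_eq]
  rw [e]
  simpa using ((hasDerivAt_id x).const_mul (1 - 2*q)).const_add q

lemma one_sub_two_pstar (q x : ℝ) : 1 - 2 * pstar q x = (1 - 2*q) * (1 - 2*x) := by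
  unfold pstar; ring

lemma pstar_mem {q x : ℝ} (hq0 : 0 ≤ q) (hq : q < 1/2) (hx0 : 0 < x) (hx : x < 1/2) :
    0 < pstar q x ∧ pstar q x < 1/2 := by
  unfold pstar; constructor <;> nlinarith

lemma le_pstar_self {q t : ℝ} (hq : 0 ≤ q) (ht : t ≤ 1/2) : t ≤ pstar q t := by
  unfold pstar; nlinarith

lemma Lam_pos {t : ℝ} (h0 : 0 < t) (h : t < 1/2) : 0 < Lam t :=
  sub_pos.2 (Real.log_lt_log h0 (by linarith))


lemma hasDerivAt_Lam {t : ℝ} (h0 : 0 < t) (h1 : t < 1) :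
    HasDerivAt Lam (-(1 / (t * (1 - t)))) t := by
  have h1' : (0:ℝ) < 1 - t := by linarith
  have ha : HasDerivAt (fun u : ℝ => Real.log (1 - u)) (-1 / (1 - t)) t := by
    have := ((hasDerivAt_id t).const_sub 1).log h1'.ne'
    exact this
  have hb : HasDerivAt Real.log t⁻¹ t := Real.hasDerivAt_log h0.ne'
  have : HasDerivAt (fun u => Real.log (1 - u) - Real.log u) (-1 / (1 - t) - t⁻¹) t :=
    ha.sub hb
  have e : (fun u => Real.log (1 - u) - Real.log u) = Lam := rfl
  rw [e] at this
  convert this using 1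
  field_simp
  ring

lemma Lam_ge {t : ℝ} (h0 : 0 < t) (h : t ≤ 1/2) : 2 * (1 - 2*t) ≤ Lam t := by
  set k : ℝ → ℝ := fun u => Lam u - 2 + 4*u with hk
  have hder : ∀ u ∈ Ioo (0:ℝ) (1/2), HasDerivAt k (-(1 / (u * (1 - u))) + 4) u := by
    intro u hu
    exact ((hasDerivAt_Lam hu.1 (by linarith [hu.2])).sub_const 2).add
      (by simpa using (hasDerivAt_id u).const_mul (4:ℝ))
  have hcont : ContinuousOn k (Ioc (0:ℝ) (1/2)) := by
    intro u hu
    by_cases hu2 : u < 1/2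
    · exact ((hder u ⟨hu.1, hu2⟩).continuousAt).continuousWithinAt
    · have hu12 : u = 1/2 := le_antisymm hu.2 (not_lt.1 hu2)
      subst hu12
      have : ContinuousAt k (1/2) := by
        have hc : ContinuousAt Lam (1/2) := by
          have : ContinuousAt (fun u : ℝ => Real.log (1 - u) - Real.log u) (1/2) := by
            have h1 : ContinuousAt (fun u : ℝ => Real.log (1 - u)) (1/2) :=
              (Real.continuousAt_log (by norm_num)).comp
                ((continuous_const.sub continuous_id).continuousAt)
            exact h1.sub (Real.continuousAt_log (by norm_num))
          exact this
        exact (hc.sub continuousAt_const).add (continuousAt_const.mul continuousAt_id)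
      exact this.continuousWithinAt
  have hanti : AntitoneOn k (Ioc (0:ℝ) (1/2)) := by
    apply antitoneOn_of_hasDerivWithinAt_nonpos (convex_Ioc _ _) hcont
      (f' := fun u => -(1 / (u * (1 - u))) + 4)
    · intro u hu
      rw [interior_Ioc] at hu
      exact (hder u hu).hasDerivWithinAt
    · intro u hu
      rw [interior_Ioc] at hu
      obtain ⟨hu1, hu2⟩ := hu
      have hD : 0 < u * (1 - u) := by nlinarith
      have : -(1 / (u * (1 - u))) + 4 = -((1 - 2*u)^2 / (u * (1 - u))) := by
        field_simp [hD.ne', (by linarith : (1:ℝ) - u ≠ 0)]; ring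
      rw [this]
      exact neg_nonpos.2 (div_nonneg (sq_nonneg _) hD.le)
  have hmem : t ∈ Ioc (0:ℝ) (1/2) := ⟨h0, h⟩
  have hmem2 : (1/2 : ℝ) ∈ Ioc (0:ℝ) (1/2) := by norm_num
  have := hanti hmem hmem2 h
  have hk2 : k (1/2) = 0 := by
    simp only [hk, Lam]
    norm_num
  rw [hk2] at this
  simp only [hk] at this
  linarith

noncomputable def psi (t : ℝ) : ℝ := t * (1 - t) * Lam t / (1 - 2*t)

lemma hasDerivAt_psi {t : ℝ} (h0 : 0 < t) (h : t < 1/2) :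
    HasDerivAt psi (((1 - 2*t + 2*t^2) * Lam t - (1 - 2*t)) / (1 - 2*t)^2) t := by
  have h1 : t < 1 := by linarith
  have ht1 : (0:ℝ) < 1 - t := by linarith
  have hden : (0:ℝ) < 1 - 2*t := by linarith
  have hq : HasDerivAt (fun u : ℝ => u * (1 - u)) (1 - 2*t) t := by
    have := (hasDerivAt_id t).mul ((hasDerivAt_id t).const_sub 1)
    refine this.congr_deriv ?_
    simp; ring
  have hphi : HasDerivAt (fun u : ℝ => u * (1 - u) * Lam u) ((1 - 2*t) * Lam t - 1) t := by
    have := hq.mul (hasDerivAt_Lam h0 h1)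
    refine this.congr_deriv ?_
    field_simp
    ring
  have hd : HasDerivAt (fun u : ℝ => 1 - 2*u) (-2) t := by
    simpa using ((hasDerivAt_id t).const_mul (2:ℝ)).const_sub 1
  have := hphi.div hd hden.ne'
  have e : psi = fun u : ℝ => u * (1 - u) * Lam u / (1 - 2*u) := rfl
  rw [e]
  refine this.congr_deriv ?_
  field_simp
  ring

lemma psi_mono : MonotoneOn psi (Ioo (0:ℝ) (1/2)) := by
  apply monotoneOn_of_hasDerivWithinAt_nonneg (convex_Ioo _ _)
    (f' := fun t => ((1 - 2*t + 2*t^2) * Lam t - (1 - 2*t)) / (1 - 2*t)^2)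
  · intro t ht
    exact (hasDerivAt_psi ht.1 ht.2).continuousAt.continuousWithinAt
  · intro t ht
    rw [interior_Ioo] at ht
    exact (hasDerivAt_psi ht.1 ht.2).hasDerivWithinAt
  · intro t ht
    rw [interior_Ioo] at ht
    obtain ⟨h0, h⟩ := ht
    apply div_nonneg _ (sq_nonneg _)
    have hpos : (0:ℝ) < 1 - 2*t + 2*t^2 := by nlinarith
    have hLg := Lam_ge h0 h.le
    nlinarith [mul_le_mul_of_nonneg_left hLg hpos.le, pow_nonneg (by linarith : (0:ℝ) ≤ 1 - 2*t) 3]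

lemma psi_le {a b : ℝ} (ha : 0 < a) (hab : a ≤ b) (hb : b < 1/2) :
    a * (1 - a) * Lam a * (1 - 2*b) ≤ b * (1 - b) * Lam b * (1 - 2*a) := by
  have h1 : psi a ≤ psi b := psi_mono ⟨ha, lt_of_le_of_lt hab hb⟩ ⟨ha.trans_le hab, hb⟩ hab
  have hda : (0:ℝ) < 1 - 2*a := by linarith [lt_of_le_of_lt hab hb]
  have hdb : (0:ℝ) < 1 - 2*b := by linarith
  rw [psi, psi, div_le_div_iff₀ hda hdb] at h1
  linarith

lemma pair_mul {c ci cj s a b : ℝ} (hci : 0 < ci) (hcj : 0 < cj) (hs : 0 < s)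
    (ha : 0 < a) (hab : a ≤ b) (hb : b < 1/2)
    (hrep1 : 1 - 2*a = ci * s) (hrep2 : 1 - 2*b = c * cj * s) :
    c * (cj^2 * ci) * (a * (1 - a) * Lam a) ≤ ci^2 * cj * (b * (1 - b) * Lam b) := by
  have h1 := psi_le ha hab hb
  rw [hrep1, hrep2] at h1
  have h2 : a * (1 - a) * Lam a * (c * cj) ≤ b * (1 - b) * Lam b * ci := by
    have h3 : a * (1 - a) * Lam a * (c * cj) * s ≤ b * (1 - b) * Lam b * ci * s := by
      calc a * (1 - a) * Lam a * (c * cj) * s = a * (1 - a) * Lam a * (c * cj * s) := by ring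
        _ ≤ b * (1 - b) * Lam b * (ci * s) := h1
        _ = b * (1 - b) * Lam b * ci * s := by ring
    exact le_of_mul_le_mul_right h3 hs
  calc c * (cj^2 * ci) * (a * (1 - a) * Lam a)
      = (ci * cj) * (a * (1 - a) * Lam a * (c * cj)) := by ring
    _ ≤ (ci * cj) * (b * (1 - b) * Lam b * ci) :=
        mul_le_mul_of_nonneg_left h2 (mul_pos hci hcj).le
    _ = ci^2 * cj * (b * (1 - b) * Lam b) := by ring

noncomputable def Ffun (p₀ p₁ x : ℝ) : ℝ :=
  (1 - 2*p₀) * Lam (pstar p₀ x) + (1 - 2*p₁) * Lam (pstar p₁ x)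

noncomputable def Gfun (p p₀ p₁ x : ℝ) : ℝ :=
  (1 - 2*p₀) * Lam (pstar p (pstar p₀ x)) + (1 - 2*p₁) * Lam (pstar p (pstar p₁ x))

lemma hasDerivAt_Lam_pstar {q x : ℝ} (h0 : 0 < pstar q x) (h1 : pstar q x < 1) :
    HasDerivAt (fun y => Lam (pstar q y))
      (-((1 - 2*q) / (pstar q x * (1 - pstar q x)))) x := by
  have := (hasDerivAt_Lam h0 h1).comp x (hasDerivAt_pstar q x)
  refine this.congr_deriv ?_
  field_simp

lemma hasDerivAt_Ffun {p₀ p₁ x : ℝ} (h0 : 0 < pstar p₀ x) (h1 : pstar p₀ x < 1)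
    (h0' : 0 < pstar p₁ x) (h1' : pstar p₁ x < 1) :
    HasDerivAt (Ffun p₀ p₁)
      (-((1 - 2*p₀)^2 / (pstar p₀ x * (1 - pstar p₀ x)) +
         (1 - 2*p₁)^2 / (pstar p₁ x * (1 - pstar p₁ x)))) x := by
  have e : Ffun p₀ p₁ = fun y =>
      (1 - 2*p₀) * Lam (pstar p₀ y) + (1 - 2*p₁) * Lam (pstar p₁ y) := rfl
  rw [e]
  have := ((hasDerivAt_Lam_pstar h0 h1).const_mul (1 - 2*p₀)).add
    ((hasDerivAt_Lam_pstar h0' h1').const_mul (1 - 2*p₁))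
  refine this.congr_deriv ?_
  field_simp
  ring

lemma hasDerivAt_Gfun {p p₀ p₁ x : ℝ}
    (h0 : 0 < pstar p (pstar p₀ x)) (h1 : pstar p (pstar p₀ x) < 1)
    (h0' : 0 < pstar p (pstar p₁ x)) (h1' : pstar p (pstar p₁ x) < 1) :
    HasDerivAt (Gfun p p₀ p₁)
      (-((1 - 2*p) * ((1 - 2*p₀)^2 / (pstar p (pstar p₀ x) * (1 - pstar p (pstar p₀ x))) +
         (1 - 2*p₁)^2 / (pstar p (pstar p₁ x) * (1 - pstar p (pstar p₁ x)))))) x := by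
  have e : Gfun p p₀ p₁ = fun y =>
      (1 - 2*p₀) * Lam (pstar p (pstar p₀ y)) + (1 - 2*p₁) * Lam (pstar p (pstar p₁ y)) := rfl
  rw [e]
  have c1 : HasDerivAt (fun y => Lam (pstar p (pstar p₀ y)))
      (-(1 / (pstar p (pstar p₀ x) * (1 - pstar p (pstar p₀ x)))) * ((1 - 2*p) * (1 - 2*p₀))) x := by
    have := (hasDerivAt_Lam h0 h1).comp x
      ((hasDerivAt_pstar p (pstar p₀ x)).comp x (hasDerivAt_pstar p₀ x))
    exact this
  have c2 : HasDerivAt (fun y => Lam (pstar p (pstar p₁ y)))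
      (-(1 / (pstar p (pstar p₁ x) * (1 - pstar p (pstar p₁ x)))) * ((1 - 2*p) * (1 - 2*p₁))) x := by
    have := (hasDerivAt_Lam h0' h1').comp x
      ((hasDerivAt_pstar p (pstar p₁ x)).comp x (hasDerivAt_pstar p₁ x))
    exact this
  have := (c1.const_mul (1 - 2*p₀)).add (c2.const_mul (1 - 2*p₁))
  refine this.congr_deriv ?_
  field_simp
  ring

lemma core {p₀ p₁ p x : ℝ} (h₀0 : 0 ≤ p₀) (h₀2 : p₀ < 1/2) (h₁0 : 0 ≤ p₁) (h₁2 : p₁ < 1/2)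
    (hp0 : 0 ≤ p) (hp2 : p < 1/2) (hA : pstar p p₀ ≥ p₁) (hB : pstar p p₁ ≥ p₀)
    (hx0 : 0 < x) (hx2 : x < 1/2) :
    (1 - 2*p) * (((1 - 2*p₀)^2 / (pstar p (pstar p₀ x) * (1 - pstar p (pstar p₀ x))) +
        (1 - 2*p₁)^2 / (pstar p (pstar p₁ x) * (1 - pstar p (pstar p₁ x)))) * Ffun p₀ p₁ x)
      ≤ ((1 - 2*p₀)^2 / (pstar p₀ x * (1 - pstar p₀ x)) +
        (1 - 2*p₁)^2 / (pstar p₁ x * (1 - pstar p₁ x))) * Gfun p p₀ p₁ x := by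
  have hs : (0:ℝ) < 1 - 2*x := by linarith
  have hc0 : (0:ℝ) < 1 - 2*p₀ := by linarith
  have hc1 : (0:ℝ) < 1 - 2*p₁ := by linarith
  have hc : (0:ℝ) < 1 - 2*p := by linarith
  obtain ⟨ha0, ha2⟩ := pstar_mem h₀0 h₀2 hx0 hx2
  obtain ⟨hb0, hb2⟩ := pstar_mem h₁0 h₁2 hx0 hx2
  set a := pstar p₀ x with hadef
  set b := pstar p₁ x with hbdef
  obtain ⟨ha'0, ha'2⟩ := pstar_mem hp0 hp2 ha0 ha2
  obtain ⟨hb'0, hb'2⟩ := pstar_mem hp0 hp2 hb0 hb2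
  set a' := pstar p a with ha'def
  set b' := pstar p b with hb'def
  -- orderings
  have haa' : a ≤ a' := le_pstar_self hp0 ha2.le
  have hbb' : b ≤ b' := le_pstar_self hp0 hb2.le
  have hba' : b ≤ a' := by
    have e : pstar p (pstar p₀ x) - pstar p₁ x = (pstar p p₀ - p₁) * (1 - 2*x) := by
      unfold pstar; ring
    rw [← hadef, ← hbdef, ← ha'def] at e
    nlinarith [mul_nonneg (by linarith : (0:ℝ) ≤ pstar p p₀ - p₁) hs.le]
  have hab' : a ≤ b' := by
    have e : pstar p (pstar p₁ x) - pstar p₀ x = (pstar p p₁ - p₀) * (1 - 2*x) := by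
      unfold pstar; ring
    rw [← hbdef, ← hadef, ← hb'def] at e
    nlinarith [mul_nonneg (by linarith : (0:ℝ) ≤ pstar p p₁ - p₀) hs.le]
  -- representations
  have ra : 1 - 2*a = (1 - 2*p₀) * (1 - 2*x) := by rw [hadef]; exact one_sub_two_pstar p₀ x
  have rb : 1 - 2*b = (1 - 2*p₁) * (1 - 2*x) := by rw [hbdef]; exact one_sub_two_pstar p₁ x
  have ra' : 1 - 2*a' = (1 - 2*p) * (1 - 2*p₀) * (1 - 2*x) := by
    rw [ha'def, one_sub_two_pstar p a, ra]; ring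
  have rb' : 1 - 2*b' = (1 - 2*p) * (1 - 2*p₁) * (1 - 2*x) := by
    rw [hb'def, one_sub_two_pstar p b, rb]; ring
  -- the four pair inequalities
  have B00 := pair_mul hc0 hc0 hs ha0 haa' ha'2 ra ra'
  have B01 := pair_mul hc0 hc1 hs ha0 hab' hb'2 ra rb'
  have B10 := pair_mul hc1 hc0 hs hb0 hba' ha'2 rb ra'
  have B11 := pair_mul hc1 hc1 hs hb0 hbb' hb'2 rb rb'
  -- positivity of denominators
  have hDa : (0:ℝ) < a * (1 - a) := mul_pos ha0 (by linarith)
  have hDb : (0:ℝ) < b * (1 - b) := mul_pos hb0 (by linarith)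
  have hDa' : (0:ℝ) < a' * (1 - a') := mul_pos ha'0 (by linarith)
  have hDb' : (0:ℝ) < b' * (1 - b') := mul_pos hb'0 (by linarith)
  have T1 := mul_le_mul_of_nonneg_right B00 (mul_pos hDb hDb').le
  have T2 := mul_le_mul_of_nonneg_right B01 (mul_pos hDa' hDb).le
  have T3 := mul_le_mul_of_nonneg_right B10 (mul_pos hDa hDb').le
  have T4 := mul_le_mul_of_nonneg_right B11 (mul_pos hDa hDa').le
  -- reduce goal to cleared form
  have eL : (1 - 2*p₀)^2 / (a' * (1 - a')) + (1 - 2*p₁)^2 / (b' * (1 - b'))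
      = ((1 - 2*p₀)^2 * (b' * (1 - b')) + (1 - 2*p₁)^2 * (a' * (1 - a')))
        / ((a' * (1 - a')) * (b' * (1 - b'))) := by
    rw [div_add_div _ _ hDa'.ne' hDb'.ne']; ring
  have eR : (1 - 2*p₀)^2 / (a * (1 - a)) + (1 - 2*p₁)^2 / (b * (1 - b))
      = ((1 - 2*p₀)^2 * (b * (1 - b)) + (1 - 2*p₁)^2 * (a * (1 - a)))
        / ((a * (1 - a)) * (b * (1 - b))) := by
    rw [div_add_div _ _ hDa.ne' hDb.ne']; ring
  have eF : Ffun p₀ p₁ x = (1 - 2*p₀) * Lam a + (1 - 2*p₁) * Lam b := rfl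
  have eG : Gfun p p₀ p₁ x = (1 - 2*p₀) * Lam a' + (1 - 2*p₁) * Lam b' := rfl
  rw [eL, eR, eF, eG]
  rw [div_mul_eq_mul_div, div_mul_eq_mul_div, mul_div_assoc',
    div_le_div_iff₀ (mul_pos hDa' hDb') (mul_pos hDa hDb)]
  linarith [T1, T2, T3, T4]

lemma Rmono {p₀ p₁ p : ℝ} (h₀0 : 0 ≤ p₀) (h₀2 : p₀ < 1/2) (h₁0 : 0 ≤ p₁) (h₁2 : p₁ < 1/2)
    (hp0 : 0 ≤ p) (hp2 : p < 1/2) (hA : pstar p p₀ ≥ p₁) (hB : pstar p p₁ ≥ p₀) :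
    MonotoneOn (fun y => (1 - 2*p) * Gfun p p₀ p₁ y / Ffun p₀ p₁ y) (Ioo (0:ℝ) (1/2)) := by
  have mem : ∀ y ∈ Ioo (0:ℝ) (1/2),
      (0 < pstar p₀ y ∧ pstar p₀ y < 1/2) ∧ (0 < pstar p₁ y ∧ pstar p₁ y < 1/2) ∧
      (0 < pstar p (pstar p₀ y) ∧ pstar p (pstar p₀ y) < 1/2) ∧
      (0 < pstar p (pstar p₁ y) ∧ pstar p (pstar p₁ y) < 1/2) := by
    intro y hy
    obtain ⟨c1, c2⟩ := pstar_mem h₀0 h₀2 hy.1 hy.2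
    obtain ⟨d1, d2⟩ := pstar_mem h₁0 h₁2 hy.1 hy.2
    exact ⟨⟨c1, c2⟩, ⟨d1, d2⟩, pstar_mem hp0 hp2 c1 c2, pstar_mem hp0 hp2 d1 d2⟩
  have hFpos : ∀ y ∈ Ioo (0:ℝ) (1/2), 0 < Ffun p₀ p₁ y := by
    intro y hy
    obtain ⟨⟨c1, c2⟩, ⟨d1, d2⟩, _, _⟩ := mem y hy
    exact add_pos (mul_pos (by linarith) (Lam_pos c1 c2))
      (mul_pos (by linarith) (Lam_pos d1 d2))
  have hder : ∀ y ∈ Ioo (0:ℝ) (1/2),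
      HasDerivAt (fun y => (1 - 2*p) * Gfun p p₀ p₁ y / Ffun p₀ p₁ y)
        (((1 - 2*p) * -((1 - 2*p) * ((1 - 2*p₀)^2 / (pstar p (pstar p₀ y) * (1 - pstar p (pstar p₀ y))) +
              (1 - 2*p₁)^2 / (pstar p (pstar p₁ y) * (1 - pstar p (pstar p₁ y))))) * Ffun p₀ p₁ y -
          (1 - 2*p) * Gfun p p₀ p₁ y *
            -((1 - 2*p₀)^2 / (pstar p₀ y * (1 - pstar p₀ y)) +
              (1 - 2*p₁)^2 / (pstar p₁ y * (1 - pstar p₁ y)))) / (Ffun p₀ p₁ y)^2) y := by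
    intro y hy
    obtain ⟨⟨c1, c2⟩, ⟨d1, d2⟩, ⟨e1, e2⟩, ⟨f1, f2⟩⟩ := mem y hy
    exact ((hasDerivAt_Gfun e1 (by linarith) f1 (by linarith)).const_mul (1 - 2*p)).div
      (hasDerivAt_Ffun c1 (by linarith) d1 (by linarith)) (hFpos y hy).ne'
  apply monotoneOn_of_hasDerivWithinAt_nonneg (convex_Ioo _ _)
    (f' := fun y => ((1 - 2*p) * -((1 - 2*p) * ((1 - 2*p₀)^2 / (pstar p (pstar p₀ y) * (1 - pstar p (pstar p₀ y))) +
              (1 - 2*p₁)^2 / (pstar p (pstar p₁ y) * (1 - pstar p (pstar p₁ y))))) * Ffun p₀ p₁ y -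
          (1 - 2*p) * Gfun p p₀ p₁ y *
            -((1 - 2*p₀)^2 / (pstar p₀ y * (1 - pstar p₀ y)) +
              (1 - 2*p₁)^2 / (pstar p₁ y * (1 - pstar p₁ y)))) / (Ffun p₀ p₁ y)^2)
  · intro y hy
    exact (hder y hy).continuousAt.continuousWithinAt
  · intro y hy
    rw [interior_Ioo] at hy
    exact (hder y hy).hasDerivWithinAt
  · intro y hy
    rw [interior_Ioo] at hy
    apply div_nonneg _ (sq_nonneg _)
    have hcore := core h₀0 h₀2 h₁0 h₁2 hp0 hp2 hA hB hy.1 hy.2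
    linarith [mul_le_mul_of_nonneg_left hcore (by linarith : (0:ℝ) ≤ 1 - 2*p)]


lemma continuous_pstar (q : ℝ) : Continuous (pstar q) := by
  unfold pstar; fun_prop

lemma continuous_fbar (p₀ p₁ : ℝ) : Continuous (fbar p₀ p₁) := by
  unfold fbar
  exact (continuous_Hb.comp (continuous_pstar p₀)).add (continuous_Hb.comp (continuous_pstar p₁))

lemma continuous_gbar (p p₀ p₁ : ℝ) : Continuous (gbar p p₀ p₁) := by
  unfold gbar
  exact (continuous_Hb.comp ((continuous_pstar p).comp (continuous_pstar p₀))).add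
    (continuous_Hb.comp ((continuous_pstar p).comp (continuous_pstar p₁)))

lemma pstar_zero (q : ℝ) : pstar q 0 = q := by unfold pstar; ring
lemma pstar_half (q : ℝ) : pstar q (1/2 : ℝ) = 1/2 := by unfold pstar; ring

lemma Hb_half : Hb (1/2 : ℝ) = 1 := by
  have h : Real.logb 2 (1/2 : ℝ) = -1 := by
    rw [one_div, Real.logb_inv, Real.logb_self_eq_one (by norm_num)]
  unfold Hb
  rw [show (1:ℝ) - 1/2 = 1/2 by norm_num, h]
  ring

lemma fbar_zero (p₀ p₁ : ℝ) : fbar p₀ p₁ 0 = Hb p₀ + Hb p₁ := by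
  unfold fbar; rw [pstar_zero, pstar_zero]

lemma fbar_half (p₀ p₁ : ℝ) : fbar p₀ p₁ (1/2) = 2 := by
  unfold fbar; rw [pstar_half, pstar_half, Hb_half]; norm_num

lemma hasDerivAt_fbar {p₀ p₁ x : ℝ} (h₀0 : 0 ≤ p₀) (h₀2 : p₀ < 1/2) (h₁0 : 0 ≤ p₁)
    (h₁2 : p₁ < 1/2) (hx0 : 0 < x) (hx2 : x < 1/2) :
    HasDerivAt (fbar p₀ p₁) (Ffun p₀ p₁ x / Real.log 2) x := by
  obtain ⟨c1, c2⟩ := pstar_mem h₀0 h₀2 hx0 hx2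
  obtain ⟨d1, d2⟩ := pstar_mem h₁0 h₁2 hx0 hx2
  have e : fbar p₀ p₁ = fun y => Hb (pstar p₀ y) + Hb (pstar p₁ y) := rfl
  rw [e]
  have h1 := (hasDerivAt_Hb c1 (by linarith)).comp x (hasDerivAt_pstar p₀ x)
  have h2 := (hasDerivAt_Hb d1 (by linarith)).comp x (hasDerivAt_pstar p₁ x)
  have := h1.add h2
  refine this.congr_deriv ?_
  unfold Ffun
  ring

lemma hasDerivAt_gbar {p p₀ p₁ x : ℝ} (h₀0 : 0 ≤ p₀) (h₀2 : p₀ < 1/2) (h₁0 : 0 ≤ p₁)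
    (h₁2 : p₁ < 1/2) (hp0 : 0 ≤ p) (hp2 : p < 1/2) (hx0 : 0 < x) (hx2 : x < 1/2) :
    HasDerivAt (gbar p p₀ p₁) ((1 - 2*p) * Gfun p p₀ p₁ x / Real.log 2) x := by
  obtain ⟨c1, c2⟩ := pstar_mem h₀0 h₀2 hx0 hx2
  obtain ⟨d1, d2⟩ := pstar_mem h₁0 h₁2 hx0 hx2
  obtain ⟨e1, e2⟩ := pstar_mem hp0 hp2 c1 c2
  obtain ⟨f1, f2⟩ := pstar_mem hp0 hp2 d1 d2
  have e : gbar p p₀ p₁ = fun y => Hb (pstar p (pstar p₀ y)) + Hb (pstar p (pstar p₁ y)) := rfl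
  rw [e]
  have h1 := (hasDerivAt_Hb e1 (by linarith)).comp x
    ((hasDerivAt_pstar p (pstar p₀ x)).comp x (hasDerivAt_pstar p₀ x))
  have h2 := (hasDerivAt_Hb f1 (by linarith)).comp x
    ((hasDerivAt_pstar p (pstar p₁ x)).comp x (hasDerivAt_pstar p₁ x))
  have := h1.add h2
  refine this.congr_deriv ?_
  unfold Gfun
  ring

lemma Ffun_pos {p₀ p₁ x : ℝ} (h₀0 : 0 ≤ p₀) (h₀2 : p₀ < 1/2) (h₁0 : 0 ≤ p₁)
    (h₁2 : p₁ < 1/2) (hx0 : 0 < x) (hx2 : x < 1/2) : 0 < Ffun p₀ p₁ x := by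
  obtain ⟨c1, c2⟩ := pstar_mem h₀0 h₀2 hx0 hx2
  obtain ⟨d1, d2⟩ := pstar_mem h₁0 h₁2 hx0 hx2
  exact add_pos (mul_pos (by linarith) (Lam_pos c1 c2)) (mul_pos (by linarith) (Lam_pos d1 d2))

lemma fbar_strictMono {p₀ p₁ : ℝ} (h₀0 : 0 ≤ p₀) (h₀2 : p₀ < 1/2) (h₁0 : 0 ≤ p₁)
    (h₁2 : p₁ < 1/2) : StrictMonoOn (fbar p₀ p₁) (Icc (0:ℝ) (1/2)) := by
  apply strictMonoOn_of_hasDerivWithinAt_pos (convex_Icc _ _)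
    ((continuous_fbar p₀ p₁).continuousOn)
    (f' := fun x => Ffun p₀ p₁ x / Real.log 2)
  · intro x hx
    rw [interior_Icc] at hx
    exact (hasDerivAt_fbar h₀0 h₀2 h₁0 h₁2 hx.1 hx.2).hasDerivWithinAt
  · intro x hx
    rw [interior_Icc] at hx
    exact div_pos (Ffun_pos h₀0 h₀2 h₁0 h₁2 hx.1 hx.2) (Real.log_pos one_lt_two)

lemma pstar_half_left (t : ℝ) : pstar (1/2 : ℝ) t = 1/2 := by unfold pstar; ring

theorem stmt1 (p₀ p₁ p : ℝ) (h₀ : p₀ ∈ Set.Ico (0 : ℝ) (1 / 2))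
    (h₁ : p₁ ∈ Set.Ico (0 : ℝ) (1 / 2)) (hp : p ∈ Set.Icc (0 : ℝ) (1 / 2))
    (ha : pstar p p₀ ≥ p₁) (hb : pstar p p₁ ≥ p₀)
    (finv : ℝ → ℝ) (hinv : ∀ x ∈ Set.Icc (0 : ℝ) (1 / 2), finv (fbar p₀ p₁ x) = x) :
    ConvexOn ℝ (Set.Icc (Hb p₀ + Hb p₁) 2) (fun ν => gbar p p₀ p₁ (finv ν)) := by
  obtain ⟨h₀0, h₀2⟩ := h₀
  obtain ⟨h₁0, h₁2⟩ := h₁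
  obtain ⟨hp0, hp2'⟩ := hp
  rcases eq_or_lt_of_le hp2' with hpe | hp2
  · -- p = 1/2 : the function is constant 2
    subst hpe
    have hconst : (fun ν => gbar (1/2) p₀ p₁ (finv ν)) = fun _ => (2:ℝ) := by
      funext ν
      unfold gbar
      rw [pstar_half_left, pstar_half_left, Hb_half]
      norm_num
    rw [hconst]
    exact convexOn_const 2 (convex_Icc _ _)
  · -- p < 1/2
    have hFs := fbar_strictMono h₀0 h₀2 h₁0 h₁2
    -- surjectivity of fbar onto the interval
    have hsurj : Set.Icc (Hb p₀ + Hb p₁) 2 ⊆ fbar p₀ p₁ '' Set.Icc 0 (1/2) := by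
      have := intermediate_value_Icc (by norm_num : (0:ℝ) ≤ 1/2)
        ((continuous_fbar p₀ p₁).continuousOn)
      rwa [fbar_zero, fbar_half] at this
    -- slope representation via Cauchy MVT
    have slope_rep : ∀ xa xb : ℝ, 0 ≤ xa → xa < xb → xb ≤ 1/2 → ∃ ξ ∈ Ioo xa xb,
        (gbar p p₀ p₁ xb - gbar p p₀ p₁ xa) * Ffun p₀ p₁ ξ
          = (fbar p₀ p₁ xb - fbar p₀ p₁ xa) * ((1 - 2*p) * Gfun p p₀ p₁ ξ) := by
      intro xa xb hxa hxab hxb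
      have hmem : ∀ y ∈ Ioo xa xb, 0 < y ∧ y < 1/2 := by
        intro y hy
        exact ⟨lt_of_le_of_lt hxa hy.1, lt_of_lt_of_le hy.2 hxb⟩
      obtain ⟨ξ, hξ, heq⟩ := exists_ratio_hasDerivAt_eq_ratio_slope
        (fbar p₀ p₁) (fun y => Ffun p₀ p₁ y / Real.log 2) hxab
        ((continuous_fbar p₀ p₁).continuousOn)
        (fun y hy => hasDerivAt_fbar h₀0 h₀2 h₁0 h₁2 (hmem y hy).1 (hmem y hy).2)
        (gbar p p₀ p₁) (fun y => (1 - 2*p) * Gfun p p₀ p₁ y / Real.log 2)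
        ((continuous_gbar p p₀ p₁).continuousOn)
        (fun y hy => hasDerivAt_gbar h₀0 h₀2 h₁0 h₁2 hp0 hp2 (hmem y hy).1 (hmem y hy).2)
      refine ⟨ξ, hξ, ?_⟩
      have hl : Real.log 2 ≠ 0 := (Real.log_pos one_lt_two).ne'
      field_simp at heq
      linarith [heq]
    apply convexOn_of_slope_mono_adjacent (convex_Icc _ _)
    intro ν₁ ν₂ ν₃ hν₁ hν₃ h12 h23
    have hν₂ : ν₂ ∈ Set.Icc (Hb p₀ + Hb p₁) 2 := ⟨le_trans hν₁.1 h12.le, le_trans h23.le hν₃.2⟩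
    obtain ⟨x₁, hx₁, hfx₁⟩ := hsurj hν₁
    obtain ⟨x₂, hx₂, hfx₂⟩ := hsurj hν₂
    obtain ⟨x₃, hx₃, hfx₃⟩ := hsurj hν₃
    have e₁ : finv ν₁ = x₁ := by rw [← hfx₁]; exact hinv x₁ hx₁
    have e₂ : finv ν₂ = x₂ := by rw [← hfx₂]; exact hinv x₂ hx₂
    have e₃ : finv ν₃ = x₃ := by rw [← hfx₃]; exact hinv x₃ hx₃
    have hlt12 : x₁ < x₂ := by
      have := (hFs.lt_iff_lt hx₁ hx₂).mp
      rw [hfx₁, hfx₂] at this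
      by_contra hcon
      have hle : x₂ ≤ x₁ := not_lt.1 hcon
      rcases eq_or_lt_of_le hle with hE | hL
      · rw [hE] at hfx₂; rw [hfx₂] at hfx₁; linarith
      · have := (hFs.lt_iff_lt hx₂ hx₁).mpr hL
        rw [hfx₁, hfx₂] at this; linarith
    have hlt23 : x₂ < x₃ := by
      by_contra hcon
      have hle : x₃ ≤ x₂ := not_lt.1 hcon
      rcases eq_or_lt_of_le hle with hE | hL
      · rw [hE] at hfx₃; rw [hfx₃] at hfx₂; linarith
      · have := (hFs.lt_iff_lt hx₃ hx₂).mpr hL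
        rw [hfx₂, hfx₃] at this; linarith
    obtain ⟨ξ₁, hξ₁, heq₁⟩ := slope_rep x₁ x₂ hx₁.1 hlt12 hx₂.2
    obtain ⟨ξ₂, hξ₂, heq₂⟩ := slope_rep x₂ x₃ hx₂.1 hlt23 hx₃.2
    have hξ₁m : ξ₁ ∈ Ioo (0:ℝ) (1/2) :=
      ⟨lt_of_le_of_lt hx₁.1 hξ₁.1, lt_of_lt_of_le hξ₁.2 hx₂.2⟩
    have hξ₂m : ξ₂ ∈ Ioo (0:ℝ) (1/2) :=
      ⟨lt_of_le_of_lt hx₂.1 hξ₂.1, lt_of_lt_of_le hξ₂.2 hx₃.2⟩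
    have hF₁ : 0 < Ffun p₀ p₁ ξ₁ := Ffun_pos h₀0 h₀2 h₁0 h₁2 hξ₁m.1 hξ₁m.2
    have hF₂ : 0 < Ffun p₀ p₁ ξ₂ := Ffun_pos h₀0 h₀2 h₁0 h₁2 hξ₂m.1 hξ₂m.2
    have hd12 : 0 < fbar p₀ p₁ x₂ - fbar p₀ p₁ x₁ := sub_pos.2 (hFs hx₁ hx₂ hlt12)
    have hd23 : 0 < fbar p₀ p₁ x₃ - fbar p₀ p₁ x₂ := sub_pos.2 (hFs hx₂ hx₃ hlt23)
    have s1 : (gbar p p₀ p₁ x₂ - gbar p p₀ p₁ x₁) / (fbar p₀ p₁ x₂ - fbar p₀ p₁ x₁)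
        = (1 - 2*p) * Gfun p p₀ p₁ ξ₁ / Ffun p₀ p₁ ξ₁ := by
      rw [div_eq_div_iff hd12.ne' hF₁.ne']
      linarith [heq₁]
    have s2 : (gbar p p₀ p₁ x₃ - gbar p p₀ p₁ x₂) / (fbar p₀ p₁ x₃ - fbar p₀ p₁ x₂)
        = (1 - 2*p) * Gfun p p₀ p₁ ξ₂ / Ffun p₀ p₁ ξ₂ := by
      rw [div_eq_div_iff hd23.ne' hF₂.ne']
      linarith [heq₂]
    simp only [e₁, e₂, e₃]
    rw [← hfx₁, ← hfx₂, ← hfx₃, s1, s2]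
    exact Rmono h₀0 h₀2 h₁0 h₁2 hp0 hp2 ha hb hξ₁m hξ₂m (le_of_lt (hξ₁.2.trans hξ₂.1))
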